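/- Let F be a field and f(X) ∈ F[X] an irreducible polynomial with f(0) ≠ 0. If p is an odd prime, then f(X^p) is irreducible in F[X] if and only if f(X^{p^n}) is irreducible in F[X] for all n ≥ 1. Similarly, f(X^4) is irreducible in F[X] if and only if f(X^{2^n}) is irreducible in F[X] for all n ≥ 1. -/

import Mathlib

open Polynomial

set_option synthInstance.maxHeartbeats 1000000
set_option maxHeartbeats 1000000

namespace Statement8

open IntermediateField

universe u v

variable {K : Type u} [Field K]

lemma isIntegral_of_minpoly_eq {E : Type*} [Field E] [Algebra K E] {x : E} {a : K}
    (hx : minpoly K x = X ^ 2 - C a) : IsIntegral K x := by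
  by_contra h
  have := minpoly.eq_zero h
  rw [hx] at this
  exact (monic_X_pow_sub_C a (two_ne_zero)).ne_zero this

lemma exists_rep {E : Type*} [Field E] [Algebra K E] {x : E} {a : K}
    (hx : minpoly K x = X ^ 2 - C a) (y : K⟮x⟯) :
    ∃ u v : K, y = algebraMap K K⟮x⟯ u + algebraMap K K⟮x⟯ v * AdjoinSimple.gen K x := by
  have hxi : IsIntegral K x := isIntegral_of_minpoly_eq hx
  obtain ⟨g, hdeg, hy⟩ := (adjoin.powerBasis hxi).exists_eq_aeval y
  refine ⟨g.coeff 0, g.coeff 1, ?_⟩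
  have hdim : (adjoin.powerBasis hxi).dim = 2 := by
    simp [adjoin.powerBasis, hx, natDegree_X_pow_sub_C]
  rw [hdim] at hdeg
  have hdle : g.degree ≤ 1 := natDegree_le_iff_degree_le.mp (Nat.lt_succ_iff.mp hdeg)
  conv_lhs => rw [hy, eq_X_add_C_of_degree_le_one hdle]
  simp [adjoin.powerBasis]
  ring

lemma indep {E : Type*} [Field E] [Algebra K E] {x : E} {a : K}
    (hx : minpoly K x = X ^ 2 - C a) {u v : K}
    (h : algebraMap K K⟮x⟯ u + algebraMap K K⟮x⟯ v * AdjoinSimple.gen K x = 0) :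
    u = 0 ∧ v = 0 := by
  have hgen : minpoly K (AdjoinSimple.gen K x) = X ^ 2 - C a := by
    rw [minpoly_gen, hx]
  have hv : v = 0 := by
    by_contra hv
    have hvz : algebraMap K K⟮x⟯ v ≠ 0 := by
      simpa using hv
    have hgeq : AdjoinSimple.gen K x = algebraMap K K⟮x⟯ (-(u / v)) := by
      rw [map_neg, map_div₀]
      field_simp
      linear_combination h
    rw [hgeq, minpoly.eq_X_sub_C] at hgen
    have := congrArg natDegree hgen
    simp [natDegree_X_sub_C, natDegree_X_pow_sub_C] at this
  refine ⟨?_, hv⟩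
  rw [hv, map_zero, zero_mul, add_zero] at h
  simpa using h

lemma gen_sq {E : Type*} [Field E] [Algebra K E] {x : E} {a : K}
    (hx : minpoly K x = X ^ 2 - C a) :
    (AdjoinSimple.gen K x) ^ 2 = algebraMap K K⟮x⟯ a := by
  have h := minpoly.aeval K (AdjoinSimple.gen K x)
  rw [minpoly_gen, hx] at h
  simp only [map_sub, map_pow, aeval_X, aeval_C] at h
  linear_combination h

lemma step {E : Type*} [Field E] [Algebra K E] {x : E} {a : K}
    (hx : minpoly K x = X ^ 2 - C a) (h4 : ∀ b : K, -(4 * b ^ 4) ≠ a) :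
    (∀ y : K⟮x⟯, y ^ 2 ≠ AdjoinSimple.gen K x) ∧
    (∀ y : K⟮x⟯, -(4 * y ^ 4) ≠ AdjoinSimple.gen K x) := by
  have hsq : (AdjoinSimple.gen K x) ^ 2 = algebraMap K K⟮x⟯ a := gen_sq hx
  constructor
  · intro y hy
    obtain ⟨u, v, rfl⟩ := exists_rep hx y
    have key : algebraMap K K⟮x⟯ (u ^ 2 + a * v ^ 2)
        + algebraMap K K⟮x⟯ (2 * u * v - 1) * AdjoinSimple.gen K x = 0 := by
      simp only [map_add, map_mul, map_sub, map_pow, map_one, map_ofNat]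
      linear_combination hy - (algebraMap K K⟮x⟯ v) ^ 2 * hsq
    obtain ⟨e1, e2⟩ := indep hx key
    exact h4 u (by linear_combination (-(4 * u ^ 2)) * e1 + (a * (2 * u * v + 1)) * e2)
  · intro y hy
    obtain ⟨s, t, hz⟩ := exists_rep hx (y ^ 2)
    have key : algebraMap K K⟮x⟯ (-(4 * (s ^ 2 + a * t ^ 2)))
        + algebraMap K K⟮x⟯ (-(8 * s * t) - 1) * AdjoinSimple.gen K x = 0 := by
      simp only [map_add, map_mul, map_sub, map_pow, map_one, map_neg, map_ofNat]
      linear_combination (4 * (y ^ 2 + algebraMap K K⟮x⟯ s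
        + algebraMap K K⟮x⟯ t * AdjoinSimple.gen K x)) * hz + hy
        + (4 * (algebraMap K K⟮x⟯ t) ^ 2) * hsq
    obtain ⟨e1, e2⟩ := indep hx key
    have h2 : (2 : K) ≠ 0 := fun h => one_ne_zero (α := K)
      (by linear_combination -e2 - 4 * s * t * h)
    have ht : t ≠ 0 := by
      intro h; rw [h] at e2; simp at e2
    have h4' : (4 : K) ≠ 0 := by
      have : (4 : K) = 2 * 2 := by norm_num
      rw [this]; exact mul_ne_zero h2 h2
    have hst : 8 * s * t = -1 := by linear_combination -e2
    have hs2 : 64 * s ^ 2 * t ^ 2 = 1 := by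
      linear_combination (8 * s * t - 1) * hst
    have ha' : a * (64 * t ^ 4) = -1 := by
      linear_combination (-(16 * t ^ 2)) * e1 + (-1 : K) * hs2
    apply h4 ((4 * t)⁻¹)
    have h4t : (4 * t) ≠ 0 := mul_ne_zero h4' ht
    field_simp
    linear_combination (-1 : K) * ha'

/-- Vahlen–Capelli criterion, 2-power case. -/
lemma two_pow_irreducible : ∀ (n : ℕ) (K : Type u) [Field K] (a : K),
    (∀ b : K, b ^ 2 ≠ a) → (∀ b : K, -(4 * b ^ 4) ≠ a) →
    Irreducible ((X : K[X]) ^ 2 ^ (n + 1) - C a) := by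
  intro n
  induction n with
  | zero =>
    intro K _ a h2 _
    simpa using X_pow_sub_C_irreducible_of_prime Nat.prime_two h2
  | succ k IH =>
    intro K _ a h2 h4
    have h1 : Irreducible ((X : K[X]) ^ 2 - C a) :=
      X_pow_sub_C_irreducible_of_prime Nat.prime_two h2
    have key := X_pow_mul_sub_C_irreducible (n := 2 ^ (k + 1)) (m := 2) h1 ?_
    · rw [show 2 ^ (k + 1) * 2 = 2 ^ (k + 1 + 1) from (pow_succ 2 (k + 1)).symm] at key
      exact key
    · intro E _ _ x hx
      obtain ⟨hg2, hg4⟩ := step hx h4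
      exact IH K⟮x⟯ (AdjoinSimple.gen K x) hg2 hg4

/-- If `p(X^l)` is irreducible then so is `p`. -/
lemma irreducible_of_irreducible_comp {p : K[X]} {l : ℕ} (hl : l ≠ 0)
    (h : Irreducible (p.comp (X ^ l))) : Irreducible p := by
  have hunit : ∀ q : K[X], IsUnit (q.comp (X ^ l)) → IsUnit q := by
    intro q hq
    have hq0 : q ≠ 0 := by rintro rfl; simp at hq
    have hdeg : q.natDegree = 0 := by
      have := natDegree_eq_zero_of_isUnit hq
      rw [natDegree_comp, natDegree_X_pow] at this
      exact (Nat.mul_eq_zero.mp this).resolve_right hl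
    rw [eq_C_of_natDegree_eq_zero hdeg]
    exact isUnit_C.mpr (isUnit_iff_ne_zero.mpr (fun hc => hq0 (by
      rw [eq_C_of_natDegree_eq_zero hdeg, hc, map_zero])))
  constructor
  · intro hp
    obtain ⟨c, hc, hcp⟩ := Polynomial.isUnit_iff.mp hp
    exact h.not_isUnit (by rw [← hcp, C_comp]; exact isUnit_C.mpr hc)
  · intro q r hqr
    have := h.isUnit_or_isUnit (show p.comp (X ^ l) = (q.comp (X ^ l)) * (r.comp (X ^ l)) by
      rw [← mul_comp, ← hqr])
    exact this.imp (hunit q) (hunit r)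

/-- Forward bridge: if `f(X^m)` is irreducible, then `X^m - α` is irreducible over `K(x)`
for any root `x` of `f`. -/
lemma X_pow_sub_gen_irreducible {f : K[X]} (hfm : f.Monic) (hf : Irreducible f)
    {m : ℕ} (hm : m ≠ 0) (h : Irreducible (f.comp (X ^ m)))
    {E : Type v} [Field E] [Algebra K E] {x : E} (hx : minpoly K x = f) :
    Irreducible ((X : K⟮x⟯[X]) ^ m - C (AdjoinSimple.gen K x)) := by
  have hxi : IsIntegral K x := by
    by_contra hc
    have := minpoly.eq_zero hc
    rw [hx] at this
    exact hfm.ne_zero this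
  haveI : FiniteDimensional K K⟮x⟯ := adjoin.finiteDimensional hxi
  have hα : minpoly K (AdjoinSimple.gen K x) = f := by rw [minpoly_gen, hx]
  have hd : 0 < f.natDegree := hf.natDegree_pos
  set α := AdjoinSimple.gen K x with hαdef
  set P : (K⟮x⟯)[X] := X ^ m - C α with hP
  have hPm : P.Monic := monic_X_pow_sub_C α hm
  have hP0 : P ≠ 0 := hPm.ne_zero
  have hPd : P.natDegree = m := natDegree_X_pow_sub_C
  have hPu : ¬IsUnit P := by
    intro hu
    have := natDegree_eq_zero_of_isUnit hu
    rw [hPd] at this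
    exact hm this
  obtain ⟨q, hq, hq'⟩ := WfDvdMonoid.exists_irreducible_factor hPu hP0
  haveI := Fact.mk hq
  set E' := AdjoinRoot q with hE'
  haveI : IsScalarTower K K⟮x⟯ E' := inferInstance
  haveI : FiniteDimensional K⟮x⟯ E' := (AdjoinRoot.powerBasis hq.ne_zero).finite
  haveI : FiniteDimensional K E' := FiniteDimensional.trans K K⟮x⟯ E'
  have hroot : (AdjoinRoot.root q) ^ m = algebraMap K⟮x⟯ E' α := by
    have h0 := eval₂_eq_zero_of_dvd_of_eval₂_eq_zero (AdjoinRoot.of q) (AdjoinRoot.root q)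
      hq' (AdjoinRoot.eval₂_root q)
    rw [hP] at h0
    rw [AdjoinRoot.algebraMap_eq]
    simpa [sub_eq_zero] using h0
  have hy : aeval (AdjoinRoot.root q) (f.comp (X ^ m)) = 0 := by
    rw [aeval_comp]
    simp only [map_pow, aeval_X]
    rw [hroot, aeval_algebraMap_apply]
    rw [show aeval α f = 0 from (hα ▸ minpoly.aeval K α)]
    exact map_zero _
  have hcm : (f.comp (X ^ m)).Monic :=
    hfm.comp (monic_X_pow m) (by simpa [natDegree_X_pow] using hm)
  have hmin : f.comp (X ^ m) = minpoly K (AdjoinRoot.root q) :=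
    minpoly.eq_of_irreducible_of_monic h hy hcm
  have hle : (f.comp (X ^ m)).natDegree ≤ Module.finrank K E' := by
    rw [hmin]; exact minpoly.natDegree_le _
  have hrank : Module.finrank K E' = f.natDegree * q.natDegree := by
    rw [← Module.finrank_mul_finrank K K⟮x⟯ E', adjoin.finrank hxi, hx,
      PowerBasis.finrank (AdjoinRoot.powerBasis hq.ne_zero)]
    rfl
  have hqm : m ≤ q.natDegree := by
    rw [hrank, natDegree_comp, natDegree_X_pow] at hle
    exact Nat.le_of_mul_le_mul_left (by linarith) hd
  exact (associated_of_dvd_of_natDegree_le hq' hP0 (hPd.trans_le hqm).ge.le).irreducible hq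

end Statement8

open Statement8 IntermediateField in
/-- Let `F` be a field and `f ∈ F[X]` irreducible with `f(0) ≠ 0`.
If `p` is an odd prime, then `f(X^p)` is irreducible iff `f(X^{pⁿ})` is irreducible for
all `n ≥ 1`; similarly `f(X⁴)` is irreducible iff `f(X^{2ⁿ})` is irreducible for all
`n ≥ 1`. -/
theorem irreducible_comp_pow_iff (F : Type*) [Field F] (f : Polynomial F)
    (hf : Irreducible f) (h0 : f.eval 0 ≠ 0) :
    (∀ p : ℕ, p.Prime → Odd p →
      (Irreducible (f.comp (X ^ p)) ↔ ∀ n : ℕ, 1 ≤ n → Irreducible (f.comp (X ^ p ^ n)))) ∧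
    (Irreducible (f.comp (X ^ 4)) ↔ ∀ n : ℕ, 1 ≤ n → Irreducible (f.comp (X ^ 2 ^ n))) := by
  have hc0 : f.leadingCoeff ≠ 0 := leadingCoeff_ne_zero.mpr hf.ne_zero
  set g := f * C f.leadingCoeff⁻¹ with hgdef
  have hgm : g.Monic := monic_mul_leadingCoeff_inv hf.ne_zero
  have hu : IsUnit (C f.leadingCoeff⁻¹ : F[X]) :=
    isUnit_C.mpr (isUnit_iff_ne_zero.mpr (inv_ne_zero hc0))
  have hassoc : Associated f g := ⟨hu.unit, by rw [hgdef]; rfl⟩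
  have hgi : Irreducible g := hassoc.irreducible hf
  have iff_m : ∀ m : ℕ, (Irreducible (f.comp (X ^ m)) ↔ Irreducible (g.comp (X ^ m))) := by
    intro m
    have : Associated (f.comp (X ^ m)) (g.comp (X ^ m)) := by
      rw [hgdef, mul_comp, C_comp]
      exact ⟨hu.unit, rfl⟩
    exact ⟨fun h => this.irreducible h, fun h => this.symm.irreducible h⟩
  constructor
  · intro p hp hodd
    constructor
    · intro h1 n hn
      have hp2 : p ≠ 2 := by rintro rfl; simp [Nat.odd_iff] at hodd
      apply (iff_m (p ^ n)).mpr
      apply Polynomial.irreducible_comp hgm (monic_X_pow _) hgi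
      intro E _ _ x hx
      have hX := X_pow_sub_gen_irreducible hgm hgi hp.ne_zero ((iff_m p).mp h1) hx
      have hb := (X_pow_sub_C_irreducible_iff_of_prime hp).mp hX
      have := X_pow_sub_C_irreducible_of_prime_pow hp hp2 n hb
      simpa [Polynomial.map_pow] using this
    · intro hall
      simpa using hall 1 le_rfl
  · constructor
    · intro h4 n hn
      obtain ⟨k, rfl⟩ : ∃ k, n = k + 1 := ⟨n - 1, by omega⟩
      have h4' : Irreducible (g.comp (X ^ 4)) := (iff_m 4).mp h4
      have h2' : Irreducible (g.comp (X ^ 2)) := by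
        apply irreducible_of_irreducible_comp (l := 2) two_ne_zero
        rw [comp_assoc, X_pow_comp, ← pow_mul]
        norm_num
        exact h4'
      apply (iff_m (2 ^ (k + 1))).mpr
      apply Polynomial.irreducible_comp hgm (monic_X_pow _) hgi
      intro E _ _ x hx
      have hX2 := X_pow_sub_gen_irreducible hgm hgi two_ne_zero h2' hx
      have hX4 := X_pow_sub_gen_irreducible hgm hgi (by norm_num : (4 : ℕ) ≠ 0) h4' hx
      have hb2 := (X_pow_sub_C_irreducible_iff_of_prime Nat.prime_two).mp hX2
      have hb4 : ∀ b : F⟮x⟯, -(4 * b ^ 4) ≠ AdjoinSimple.gen F x := by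
        intro b hb
        have hfact : (X : F⟮x⟯[X]) ^ 4 - C (AdjoinSimple.gen F x)
            = (X ^ 2 - C (2 * b) * X + C (2 * b ^ 2))
              * (X ^ 2 + C (2 * b) * X + C (2 * b ^ 2)) := by
          rw [← hb]
          simp only [map_neg, map_mul, map_pow, map_ofNat]
          ring
        have hd1 : (X ^ 2 - C (2 * b) * X + C (2 * b ^ 2) : F⟮x⟯[X]).natDegree = 2 := by
          rw [show (X ^ 2 - C (2 * b) * X + C (2 * b ^ 2) : F⟮x⟯[X])
              = C 1 * X ^ 2 + C (-(2 * b)) * X + C (2 * b ^ 2) by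
            simp only [map_one, map_neg, one_mul]; ring]
          exact natDegree_quadratic one_ne_zero
        have hd2 : (X ^ 2 + C (2 * b) * X + C (2 * b ^ 2) : F⟮x⟯[X]).natDegree = 2 := by
          rw [show (X ^ 2 + C (2 * b) * X + C (2 * b ^ 2) : F⟮x⟯[X])
              = C 1 * X ^ 2 + C (2 * b) * X + C (2 * b ^ 2) by
            simp only [map_one, one_mul]]
          exact natDegree_quadratic one_ne_zero
        rcases hX4.isUnit_or_isUnit hfact with hu' | hu'
        · have := natDegree_eq_zero_of_isUnit hu'
          rw [hd1] at this; exact two_ne_zero this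
        · have := natDegree_eq_zero_of_isUnit hu'
          rw [hd2] at this; exact two_ne_zero this
      have := two_pow_irreducible k F⟮x⟯ (AdjoinSimple.gen F x) hb2 hb4
      simpa [Polynomial.map_pow] using this
    · intro hall
      have := hall 2 one_le_two
      norm_num at this
      exact this
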